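/- On a (2,1)-stable instance of Uniform Metric Labeling, the LP relaxation is tight: its optimal value equals the optimal integer objective Q(g), and the integer solution corresponding to g is an optimal LP solution; moreover every optimal LP solution is integral. -/

import Mathlib

open Finset

variable {V L : Type*}

/-- `x` is a probability vector over the labels `L`. -/
def IsProbVec [Fintype L] (x : L → ℝ) : Prop :=
  (∀ i, 0 ≤ x i) ∧ ∑ i, x i = 1

/-- Half the ℓ₁ distance between two label vectors. -/
noncomputable def dL1 [Fintype L] (x y : L → ℝ) : ℝ :=
  (1 / 2) * ∑ i, |x i - y i|

/-- The LP relaxation objective of Uniform Metric Labeling. -/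
noncomputable def QLP [Fintype V] [Fintype L] (E : Finset (V × V))
    (c : V → L → ℝ) (w : V × V → ℝ) (μ : V → L → ℝ) : ℝ :=
  ∑ u, ∑ i, c u i * μ u i + ∑ e ∈ E, w e * dL1 (μ e.1) (μ e.2)

/-- The Uniform Metric Labeling objective. -/
def Q [Fintype V] [DecidableEq L] (E : Finset (V × V)) (c : V → L → ℝ)
    (w : V × V → ℝ) (g : V → L) : ℝ :=
  ∑ u, c u (g u) + ∑ e ∈ E.filter (fun e => g e.1 ≠ g e.2), w e

/-- The integer LP solution corresponding to a labeling `f`. -/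
def toVec [DecidableEq L] (f : V → L) : V → L → ℝ :=
  fun u i => if f u = i then 1 else 0

/-- `w'` is a `(β,γ)`-perturbation of `w` on edge set `E`. -/
def IsPerturbation (E : Finset (V × V)) (β γ : ℝ) (w w' : V × V → ℝ) : Prop :=
  ∀ e ∈ E, w e / β ≤ w' e ∧ w' e ≤ γ * w e

/-- `(β,γ)`-stability: `g` is the unique optimum under every `(β,γ)`-perturbation. -/
def IsStable [Fintype V] [DecidableEq L] (E : Finset (V × V)) (c : V → L → ℝ)
    (w : V × V → ℝ) (β γ : ℝ) (g : V → L) : Prop :=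
  ∀ w', IsPerturbation E β γ w w' → ∀ h : V → L, h ≠ g → Q E c w' g < Q E c w' h

namespace LPTightAux

open MeasureTheory

/-! ### The step function and its integral -/

noncomputable def step (a : ℝ) : ℝ → ℝ := fun θ => if θ ≤ a then 1 else 0

lemma step_nonneg (a θ : ℝ) : 0 ≤ step a θ := by
  unfold step; split <;> norm_num

lemma step_antitone (a : ℝ) : Antitone (step a) := by
  intro x y hxy
  unfold step
  split_ifs with h1 h2 h3 <;> try norm_num
  exact absurd (hxy.trans h1) h2

lemma step_intervalIntegrable (a : ℝ) : IntervalIntegrable (step a) volume 0 1 :=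
  (step_antitone a).intervalIntegrable

lemma integral_step {a : ℝ} (h0 : 0 ≤ a) (h1 : a ≤ 1) :
    ∫ θ in (0:ℝ)..1, step a θ = a := by
  have heq : step a = Set.indicator {x : ℝ | x ≤ a} (fun _ => (1:ℝ)) := by
    funext θ
    simp [step, Set.indicator]
  rw [heq, intervalIntegral.integral_indicator (Set.mem_Icc.2 ⟨h0, h1⟩)]
  simp

section Main

variable [Fintype V] [Fintype L] [DecidableEq L]

/-! ### The comparison labelings and stability quantity -/

/-- The labeling that takes label `i` wherever `μ (·) i ≥ θ`, and `g` elsewhere. -/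
noncomputable def hump (g : V → L) (μ : V → L → ℝ) (i : L) (θ : ℝ) : V → L :=
  fun u => if θ ≤ μ u i then i else g u

/-- Edge coefficient in the adversarially perturbed comparison of `h` against `g`. -/
noncomputable def edgeCoef (g h : V → L) (e : V × V) : ℝ :=
  (if h e.1 ≠ h e.2 ∧ g e.1 = g e.2 then (1:ℝ)/2 else 0)
  - (if g e.1 ≠ g e.2 ∧ h e.1 = h e.2 then 1 else 0)

/-- The margin of `h` over `g` under the worst-case `(2,1)`-perturbation. -/
noncomputable def Delta (E : Finset (V × V)) (c : V → L → ℝ) (w : V × V → ℝ)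
    (g h : V → L) : ℝ :=
  (∑ u, (c u (h u) - c u (g u))) + ∑ e ∈ E, w e * edgeCoef g h e

lemma delta_pos {E : Finset (V × V)} {c : V → L → ℝ} {w : V × V → ℝ}
    (hw : ∀ e ∈ E, 0 ≤ w e) {g : V → L} (hstable : IsStable E c w 2 1 g)
    (h : V → L) (hne : h ≠ g) : 0 < Delta E c w g h := by
  classical
  set w' : V × V → ℝ := fun e => if h e.1 ≠ h e.2 ∧ g e.1 = g e.2 then w e / 2 else w e
    with hw'def
  have hpert : IsPerturbation E 2 1 w w' := by
    intro e he
    have h0 := hw e he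
    simp only [hw'def]
    split_ifs <;> constructor <;> linarith
  have hlt := hstable w' hpert h hne
  have hkey : Delta E c w g h = Q E c w' h - Q E c w' g := by
    unfold Delta Q
    have hnode : (∑ u, (c u (h u) - c u (g u)))
        = (∑ u, c u (h u)) - (∑ u, c u (g u)) := Finset.sum_sub_distrib _ _
    have hedge : ∑ e ∈ E, w e * edgeCoef g h e
        = ∑ e ∈ E, ((if h e.1 ≠ h e.2 then w' e else 0)
            - (if g e.1 ≠ g e.2 then w' e else 0)) := by
      refine Finset.sum_congr rfl fun e _ => ?_
      unfold edgeCoef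
      by_cases h1 : h e.1 = h e.2 <;> by_cases h2 : g e.1 = g e.2 <;>
        simp [hw'def, h1, h2] <;> ring
    have hsplit : ∑ e ∈ E, ((if h e.1 ≠ h e.2 then w' e else 0)
            - (if g e.1 ≠ g e.2 then w' e else 0))
        = (∑ e ∈ E, if h e.1 ≠ h e.2 then w' e else 0)
          - (∑ e ∈ E, if g e.1 ≠ g e.2 then w' e else 0) := Finset.sum_sub_distrib _ _
    rw [hnode, hedge, hsplit, ← Finset.sum_filter, ← Finset.sum_filter]
    ring
  linarith [hkey ▸ sub_pos.2 hlt]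

lemma delta_self (E : Finset (V × V)) (c : V → L → ℝ) (w : V × V → ℝ) (g : V → L) :
    Delta E c w g g = 0 := by
  unfold Delta edgeCoef
  have h1 : ∀ e ∈ E, w e * ((if g e.1 ≠ g e.2 ∧ g e.1 = g e.2 then (1:ℝ)/2 else 0)
      - (if g e.1 ≠ g e.2 ∧ g e.1 = g e.2 then 1 else 0)) = 0 := by
    intro e _
    by_cases h2 : g e.1 = g e.2 <;> simp [h2]
  rw [Finset.sum_congr rfl h1]
  simp

lemma delta_nonneg {E : Finset (V × V)} {c : V → L → ℝ} {w : V × V → ℝ}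
    (hw : ∀ e ∈ E, 0 ≤ w e) {g : V → L} (hstable : IsStable E c w 2 1 g)
    (h : V → L) : 0 ≤ Delta E c w g h := by
  rcases eq_or_ne h g with rfl | hne
  · exact le_of_eq (delta_self E c w h).symm
  · exact (delta_pos hw hstable h hne).le

/-! ### Pointwise decomposition of `Delta` along the hump family -/

lemma hump_node (c : V → L → ℝ) (g : V → L) (μ : V → L → ℝ) (i : L) (θ : ℝ) (u : V) :
    c u (hump g μ i θ u) - c u (g u) = (c u i - c u (g u)) * step (μ u i) θ := by
  unfold hump step
  by_cases hθ : θ ≤ μ u i <;> simp [hθ]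

/-- The edge contribution of `hump g μ i θ`, as a function of `θ`. -/
noncomputable def rho (g : V → L) (μ : V → L → ℝ) (i : L) (e : V × V) : ℝ → ℝ :=
  if g e.1 = g e.2 then
    (if i = g e.1 then (fun _ => 0) else
      fun θ => (1/2) * (step (max (μ e.1 i) (μ e.2 i)) θ - step (min (μ e.1 i) (μ e.2 i)) θ))
  else
    (if i = g e.1 then fun θ => -step (μ e.2 i) θ
     else if i = g e.2 then fun θ => -step (μ e.1 i) θ
     else fun θ => -step (min (μ e.1 i) (μ e.2 i)) θ)

lemma hump_edge (g : V → L) (μ : V → L → ℝ) (i : L) (θ : ℝ) (e : V × V) :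
    edgeCoef g (hump g μ i θ) e = rho g μ i e θ := by
  have happ : ∀ u, hump g μ i θ u = if θ ≤ μ u i then i else g u := fun _ => rfl
  unfold edgeCoef
  by_cases hg : g e.1 = g e.2
  · by_cases hi : i = g e.1
    · have he1 : hump g μ i θ e.1 = g e.1 := by
        rw [happ]; split_ifs
        · exact hi
        · rfl
      have he2 : hump g μ i θ e.2 = g e.1 := by
        rw [happ]; split_ifs
        · exact hi
        · exact hg.symm
      rw [he1, he2]
      simp only [rho, if_pos hg, if_pos hi]
      simp [hg]
    · have hi2 : ¬ i = g e.2 := fun hcon => hi (hcon.trans hg.symm)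
      have hi' : ¬ g e.1 = i := fun hcon => hi hcon.symm
      have hi2' : ¬ g e.2 = i := fun hcon => hi2 hcon.symm
      simp only [rho, if_pos hg, if_neg hi]
      by_cases ha : θ ≤ μ e.1 i <;> by_cases hb : θ ≤ μ e.2 i
      · have he1 : hump g μ i θ e.1 = i := by rw [happ, if_pos ha]
        have he2 : hump g μ i θ e.2 = i := by rw [happ, if_pos hb]
        have hmin : θ ≤ min (μ e.1 i) (μ e.2 i) := le_min ha hb
        have hmax : θ ≤ max (μ e.1 i) (μ e.2 i) := le_max_of_le_left ha
        rw [he1, he2]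
        simp [step, hg, hmin, hmax]
      · have he1 : hump g μ i θ e.1 = i := by rw [happ, if_pos ha]
        have he2 : hump g μ i θ e.2 = g e.2 := by rw [happ, if_neg hb]
        have hmin : ¬ θ ≤ min (μ e.1 i) (μ e.2 i) :=
          fun hcon => hb (hcon.trans (min_le_right _ _))
        have hmax : θ ≤ max (μ e.1 i) (μ e.2 i) := le_max_of_le_left ha
        rw [he1, he2]
        simp [step, hg, hmin, hmax, hi2]
      · have he1 : hump g μ i θ e.1 = g e.1 := by rw [happ, if_neg ha]
        have he2 : hump g μ i θ e.2 = i := by rw [happ, if_pos hb]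
        have hmin : ¬ θ ≤ min (μ e.1 i) (μ e.2 i) :=
          fun hcon => ha (hcon.trans (min_le_left _ _))
        have hmax : θ ≤ max (μ e.1 i) (μ e.2 i) := le_max_of_le_right hb
        rw [he1, he2]
        simp [step, hg, hmin, hmax, hi', hi2']
      · have he1 : hump g μ i θ e.1 = g e.1 := by rw [happ, if_neg ha]
        have he2 : hump g μ i θ e.2 = g e.2 := by rw [happ, if_neg hb]
        have hmin : ¬ θ ≤ min (μ e.1 i) (μ e.2 i) :=
          fun hcon => ha (hcon.trans (min_le_left _ _))
        have hmax : ¬ θ ≤ max (μ e.1 i) (μ e.2 i) := by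
          rw [le_max_iff]
          rintro (h | h)
          · exact ha h
          · exact hb h
        rw [he1, he2]
        simp [step, hg, hmin, hmax]
  · by_cases hi : i = g e.1
    · have hi2 : ¬ i = g e.2 := fun hcon => hg (hi.symm.trans hcon)
      have he1 : hump g μ i θ e.1 = g e.1 := by
        rw [happ]; split_ifs
        · exact hi
        · rfl
      simp only [rho, if_neg hg, if_pos hi]
      by_cases hb : θ ≤ μ e.2 i
      · have he2 : hump g μ i θ e.2 = g e.1 := by rw [happ, if_pos hb]; exact hi
        rw [he1, he2]
        simp [step, hg, hb]
      · have he2 : hump g μ i θ e.2 = g e.2 := by rw [happ, if_neg hb]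
        rw [he1, he2]
        simp [step, hg, hb]
    · by_cases hi2 : i = g e.2
      · have he2 : hump g μ i θ e.2 = g e.2 := by
          rw [happ]; split_ifs
          · exact hi2
          · rfl
        simp only [rho, if_neg hg, if_neg hi, if_pos hi2]
        by_cases ha : θ ≤ μ e.1 i
        · have he1 : hump g μ i θ e.1 = g e.2 := by rw [happ, if_pos ha]; exact hi2
          rw [he1, he2]
          simp [step, hg, ha]
        · have he1 : hump g μ i θ e.1 = g e.1 := by rw [happ, if_neg ha]
          rw [he1, he2]
          simp [step, hg, ha]
      · have hi' : ¬ g e.1 = i := fun hcon => hi hcon.symm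
        have hi2' : ¬ g e.2 = i := fun hcon => hi2 hcon.symm
        simp only [rho, if_neg hg, if_neg hi, if_neg hi2]
        by_cases ha : θ ≤ μ e.1 i <;> by_cases hb : θ ≤ μ e.2 i
        · have he1 : hump g μ i θ e.1 = i := by rw [happ, if_pos ha]
          have he2 : hump g μ i θ e.2 = i := by rw [happ, if_pos hb]
          have hmin : θ ≤ min (μ e.1 i) (μ e.2 i) := le_min ha hb
          rw [he1, he2]
          simp [step, hg, hmin]
        · have he1 : hump g μ i θ e.1 = i := by rw [happ, if_pos ha]
          have he2 : hump g μ i θ e.2 = g e.2 := by rw [happ, if_neg hb]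
          have hmin : ¬ θ ≤ min (μ e.1 i) (μ e.2 i) :=
            fun hcon => hb (hcon.trans (min_le_right _ _))
          rw [he1, he2]
          simp [step, hg, hmin, hi2]
        · have he1 : hump g μ i θ e.1 = g e.1 := by rw [happ, if_neg ha]
          have he2 : hump g μ i θ e.2 = i := by rw [happ, if_pos hb]
          have hmin : ¬ θ ≤ min (μ e.1 i) (μ e.2 i) :=
            fun hcon => ha (hcon.trans (min_le_left _ _))
          rw [he1, he2]
          simp [step, hg, hmin, hi']
        · have he1 : hump g μ i θ e.1 = g e.1 := by rw [happ, if_neg ha]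
          have he2 : hump g μ i θ e.2 = g e.2 := by rw [happ, if_neg hb]
          have hmin : ¬ θ ≤ min (μ e.1 i) (μ e.2 i) :=
            fun hcon => ha (hcon.trans (min_le_left _ _))
          rw [he1, he2]
          simp [step, hg, hmin]

lemma delta_hump_eq (E : Finset (V × V)) (c : V → L → ℝ) (w : V × V → ℝ)
    (g : V → L) (μ : V → L → ℝ) (i : L) (θ : ℝ) :
    Delta E c w g (hump g μ i θ) =
      (∑ u, (c u i - c u (g u)) * step (μ u i) θ) + ∑ e ∈ E, w e * rho g μ i e θ := by
  unfold Delta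
  congr 1
  · exact Finset.sum_congr rfl fun u _ => hump_node c g μ i θ u
  · exact Finset.sum_congr rfl fun e _ => by rw [hump_edge]

/-! ### Integration in `θ` -/

lemma rho_intervalIntegrable (g : V → L) (μ : V → L → ℝ) (i : L) (e : V × V) :
    IntervalIntegrable (rho g μ i e) volume 0 1 := by
  unfold rho
  split_ifs
  · exact intervalIntegrable_const
  · exact ((step_intervalIntegrable _).sub (step_intervalIntegrable _)).const_mul _
  · exact (step_intervalIntegrable _).neg
  · exact (step_intervalIntegrable _).neg
  · exact (step_intervalIntegrable _).neg

/-- The value of `∫ rho`. -/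
noncomputable def riVal (g : V → L) (μ : V → L → ℝ) (i : L) (e : V × V) : ℝ :=
  if g e.1 = g e.2 then
    (if i = g e.1 then 0 else
      (1/2) * (max (μ e.1 i) (μ e.2 i) - min (μ e.1 i) (μ e.2 i)))
  else
    (if i = g e.1 then -μ e.2 i else if i = g e.2 then -μ e.1 i
     else -min (μ e.1 i) (μ e.2 i))

lemma integral_rho (g : V → L) {μ : V → L → ℝ}
    (hμ01 : ∀ u j, 0 ≤ μ u j ∧ μ u j ≤ 1) (i : L) (e : V × V) :
    ∫ θ in (0:ℝ)..1, rho g μ i e θ = riVal g μ i e := by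
  obtain ⟨h10, h11⟩ := hμ01 e.1 i
  obtain ⟨h20, h21⟩ := hμ01 e.2 i
  have hmin0 : 0 ≤ min (μ e.1 i) (μ e.2 i) := le_min h10 h20
  have hmin1 : min (μ e.1 i) (μ e.2 i) ≤ 1 := (min_le_left _ _).trans h11
  have hmax0 : 0 ≤ max (μ e.1 i) (μ e.2 i) := h10.trans (le_max_left _ _)
  have hmax1 : max (μ e.1 i) (μ e.2 i) ≤ 1 := max_le h11 h21
  unfold rho riVal
  split_ifs
  · simp
  · rw [intervalIntegral.integral_const_mul,
      intervalIntegral.integral_sub (step_intervalIntegrable _) (step_intervalIntegrable _),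
      integral_step hmax0 hmax1, integral_step hmin0 hmin1]
  · rw [intervalIntegral.integral_neg, integral_step h20 h21]
  · rw [intervalIntegral.integral_neg, integral_step h10 h11]
  · rw [intervalIntegral.integral_neg, integral_step hmin0 hmin1]

/-- The integral of the stability margin along the hump family for label `i`. -/
noncomputable def Ei (E : Finset (V × V)) (c : V → L → ℝ) (w : V × V → ℝ)
    (g : V → L) (μ : V → L → ℝ) (i : L) : ℝ :=
  (∑ u, (c u i - c u (g u)) * μ u i) + ∑ e ∈ E, w e * riVal g μ i e

lemma delta_hump_intervalIntegrable (E : Finset (V × V)) (c : V → L → ℝ)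
    (w : V × V → ℝ) (g : V → L) (μ : V → L → ℝ) (i : L) :
    IntervalIntegrable (fun θ => Delta E c w g (hump g μ i θ)) volume 0 1 := by
  have hfe : (fun θ => Delta E c w g (hump g μ i θ))
      = (fun θ => (∑ u, (c u i - c u (g u)) * step (μ u i) θ)
          + ∑ e ∈ E, w e * rho g μ i e θ) :=
    funext fun θ => delta_hump_eq E c w g μ i θ
  rw [hfe]
  refine IntervalIntegrable.add ?_ ?_
  · have := IntervalIntegrable.sum (μ := volume) (a := (0:ℝ)) (b := 1) Finset.univ
      (f := fun (u : V) => fun θ => (c u i - c u (g u)) * step (μ u i) θ)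
      (fun u _ => (step_intervalIntegrable _).const_mul _)
    simpa [Finset.sum_fn] using this
  · have := IntervalIntegrable.sum (μ := volume) (a := (0:ℝ)) (b := 1) E
      (f := fun (e : V × V) => fun θ => w e * rho g μ i e θ)
      (fun e _ => (rho_intervalIntegrable g μ i e).const_mul _)
    simpa [Finset.sum_fn] using this

lemma integral_delta_hump (E : Finset (V × V)) (c : V → L → ℝ) (w : V × V → ℝ)
    (g : V → L) {μ : V → L → ℝ} (hμ01 : ∀ u j, 0 ≤ μ u j ∧ μ u j ≤ 1) (i : L) :
    ∫ θ in (0:ℝ)..1, Delta E c w g (hump g μ i θ) = Ei E c w g μ i := by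
  have hInt1 : IntervalIntegrable
      (fun θ => ∑ u, (c u i - c u (g u)) * step (μ u i) θ) volume 0 1 := by
    have := IntervalIntegrable.sum (μ := volume) (a := (0:ℝ)) (b := 1) Finset.univ
      (f := fun (u : V) => fun θ => (c u i - c u (g u)) * step (μ u i) θ)
      (fun u _ => (step_intervalIntegrable _).const_mul _)
    simpa [Finset.sum_fn] using this
  have hInt2 : IntervalIntegrable
      (fun θ => ∑ e ∈ E, w e * rho g μ i e θ) volume 0 1 := by
    have := IntervalIntegrable.sum (μ := volume) (a := (0:ℝ)) (b := 1) E
      (f := fun (e : V × V) => fun θ => w e * rho g μ i e θ)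
      (fun e _ => (rho_intervalIntegrable g μ i e).const_mul _)
    simpa [Finset.sum_fn] using this
  calc ∫ θ in (0:ℝ)..1, Delta E c w g (hump g μ i θ)
      = ∫ θ in (0:ℝ)..1, ((∑ u, (c u i - c u (g u)) * step (μ u i) θ)
          + ∑ e ∈ E, w e * rho g μ i e θ) :=
        intervalIntegral.integral_congr fun θ _ => delta_hump_eq E c w g μ i θ
    _ = (∫ θ in (0:ℝ)..1, ∑ u, (c u i - c u (g u)) * step (μ u i) θ)
          + ∫ θ in (0:ℝ)..1, ∑ e ∈ E, w e * rho g μ i e θ :=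
        intervalIntegral.integral_add hInt1 hInt2
    _ = (∑ u, ∫ θ in (0:ℝ)..1, (c u i - c u (g u)) * step (μ u i) θ)
          + ∑ e ∈ E, ∫ θ in (0:ℝ)..1, w e * rho g μ i e θ := by
        rw [intervalIntegral.integral_finset_sum
            (fun u _ => (step_intervalIntegrable (μ u i)).const_mul _),
          intervalIntegral.integral_finset_sum
            (fun e _ => (rho_intervalIntegrable g μ i e).const_mul _)]
    _ = Ei E c w g μ i := by
        unfold Ei
        congr 1
        · refine Finset.sum_congr rfl fun u _ => ?_
          rw [intervalIntegral.integral_const_mul, integral_step (hμ01 u i).1 (hμ01 u i).2]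
        · refine Finset.sum_congr rfl fun e _ => ?_
          rw [intervalIntegral.integral_const_mul, integral_rho g hμ01 i e]

lemma Ei_nonneg {E : Finset (V × V)} {c : V → L → ℝ} {w : V × V → ℝ}
    (hw : ∀ e ∈ E, 0 ≤ w e) {g : V → L} (hstable : IsStable E c w 2 1 g)
    {μ : V → L → ℝ} (hμ01 : ∀ u j, 0 ≤ μ u j ∧ μ u j ≤ 1) (i : L) :
    0 ≤ Ei E c w g μ i := by
  rw [← integral_delta_hump E c w g hμ01 i]
  exact intervalIntegral.integral_nonneg zero_le_one
    (fun θ _ => delta_nonneg hw hstable _)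

/-! ### Summation over labels -/

lemma sum_min_eq {x y : L → ℝ} (hx : IsProbVec x) (hy : IsProbVec y) :
    ∑ i, min (x i) (y i) = 1 - dL1 x y := by
  have hpt : ∀ i, min (x i) (y i) = (x i + y i - |x i - y i|) / 2 := fun i => by
    rcases le_total (x i) (y i) with h | h
    · rw [min_eq_left h, abs_of_nonpos (by linarith)]; ring
    · rw [min_eq_right h, abs_of_nonneg (by linarith)]; ring
  rw [Finset.sum_congr rfl fun i _ => hpt i]
  have h1 : ∑ i, (x i + y i - |x i - y i|) / 2
      = ((∑ i, x i) + (∑ i, y i) - ∑ i, |x i - y i|) / 2 := by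
    rw [← Finset.sum_div, Finset.sum_sub_distrib, Finset.sum_add_distrib]
  rw [h1, hx.2, hy.2, dL1]
  ring

lemma riVal_sum_le (g : V → L) {μ : V → L → ℝ} (hμ : ∀ u, IsProbVec (μ u)) (e : V × V) :
    ∑ i, riVal g μ i e ≤ dL1 (μ e.1) (μ e.2) - (if g e.1 ≠ g e.2 then 1 else 0) := by
  unfold riVal
  by_cases hg : g e.1 = g e.2
  · rw [if_neg (not_not_intro hg), sub_zero]
    have hbd : ∀ i ∈ Finset.univ, (if g e.1 = g e.2 then
        (if i = g e.1 then (0:ℝ) else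
          (1/2) * (max (μ e.1 i) (μ e.2 i) - min (μ e.1 i) (μ e.2 i)))
      else
        (if i = g e.1 then -μ e.2 i else if i = g e.2 then -μ e.1 i
         else -min (μ e.1 i) (μ e.2 i)))
        ≤ (1/2) * |μ e.1 i - μ e.2 i| := by
      intro i _
      rw [if_pos hg]
      split_ifs
      · positivity
      · rw [max_sub_min_eq_abs, abs_sub_comm]
    calc ∑ i, _ ≤ ∑ i, (1/2) * |μ e.1 i - μ e.2 i| := Finset.sum_le_sum hbd
      _ = dL1 (μ e.1) (μ e.2) := by rw [dL1, Finset.mul_sum]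
  · rw [if_pos hg]
    have hbd : ∀ i ∈ Finset.univ, (if g e.1 = g e.2 then
        (if i = g e.1 then (0:ℝ) else
          (1/2) * (max (μ e.1 i) (μ e.2 i) - min (μ e.1 i) (μ e.2 i)))
      else
        (if i = g e.1 then -μ e.2 i else if i = g e.2 then -μ e.1 i
         else -min (μ e.1 i) (μ e.2 i)))
        ≤ -min (μ e.1 i) (μ e.2 i) := by
      intro i _
      rw [if_neg hg]
      split_ifs
      · exact neg_le_neg (min_le_right _ _)
      · exact neg_le_neg (min_le_left _ _)
      · exact le_refl _
    calc ∑ i, _ ≤ ∑ i, -min (μ e.1 i) (μ e.2 i) := Finset.sum_le_sum hbd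
      _ = -(∑ i, min (μ e.1 i) (μ e.2 i)) := by rw [Finset.sum_neg_distrib]
      _ = dL1 (μ e.1) (μ e.2) - 1 := by rw [sum_min_eq (hμ e.1) (hμ e.2)]; ring

lemma sum_Ei_le (E : Finset (V × V)) (c : V → L → ℝ) (w : V × V → ℝ)
    (hw : ∀ e ∈ E, 0 ≤ w e) (g : V → L) (μ : V → L → ℝ)
    (hμ : ∀ u, IsProbVec (μ u)) :
    ∑ i, Ei E c w g μ i ≤ QLP E c w μ - Q E c w g := by
  unfold Ei
  rw [Finset.sum_add_distrib]
  have hnode : ∑ i, ∑ u, (c u i - c u (g u)) * μ u i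
      = (∑ u, ∑ i, c u i * μ u i) - ∑ u, c u (g u) := by
    rw [Finset.sum_comm, ← Finset.sum_sub_distrib]
    refine Finset.sum_congr rfl fun u _ => ?_
    have h1 : ∑ i, (c u i - c u (g u)) * μ u i
        = (∑ i, c u i * μ u i) - c u (g u) * ∑ i, μ u i := by
      rw [Finset.mul_sum, ← Finset.sum_sub_distrib]
      exact Finset.sum_congr rfl fun i _ => by ring
    rw [h1, (hμ u).2, mul_one]
  have hedge : ∑ i, ∑ e ∈ E, w e * riVal g μ i e
      ≤ (∑ e ∈ E, w e * dL1 (μ e.1) (μ e.2))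
        - ∑ e ∈ E.filter (fun e => g e.1 ≠ g e.2), w e := by
    rw [Finset.sum_comm, Finset.sum_filter, ← Finset.sum_sub_distrib]
    refine Finset.sum_le_sum fun e he => ?_
    rw [← Finset.mul_sum]
    calc w e * ∑ i, riVal g μ i e
        ≤ w e * (dL1 (μ e.1) (μ e.2) - (if g e.1 ≠ g e.2 then 1 else 0)) :=
          mul_le_mul_of_nonneg_left (riVal_sum_le g hμ e) (hw e he)
      _ = w e * dL1 (μ e.1) (μ e.2) - (if g e.1 ≠ g e.2 then w e else 0) := by
          split_ifs <;> ring
  unfold QLP Q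
  linarith

/-! ### Value of the integral solution -/

lemma qlp_toVec (E : Finset (V × V)) (c : V → L → ℝ) (w : V × V → ℝ) (g : V → L) :
    QLP E c w (toVec g) = Q E c w g := by
  unfold QLP Q
  congr 1
  · refine Finset.sum_congr rfl fun u _ => ?_
    have h1 : ∀ i ∈ Finset.univ, c u i * toVec g u i = if g u = i then c u i else 0 := by
      intro i _
      unfold toVec
      split_ifs <;> ring
    rw [Finset.sum_congr rfl h1, Finset.sum_ite_eq]
    simp
  · rw [Finset.sum_filter]
    refine Finset.sum_congr rfl fun e _ => ?_
    by_cases hg : g e.1 = g e.2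
    · have hd : dL1 (toVec g e.1) (toVec g e.2) = 0 := by
        simp [dL1, toVec, hg]
      rw [hd, mul_zero, if_neg (not_not_intro hg)]
    · have hpt : ∀ i ∈ Finset.univ,
          |toVec g e.1 i - toVec g e.2 i|
            = (if g e.1 = i then (1:ℝ) else 0) + (if g e.2 = i then 1 else 0) := by
        intro i _
        unfold toVec
        by_cases h1 : g e.1 = i <;> by_cases h2 : g e.2 = i
        · exact absurd (h1.trans h2.symm) hg
        · simp [h1, h2]
        · simp [h1, h2]
        · simp [h1, h2]
      have hd : dL1 (toVec g e.1) (toVec g e.2) = 1 := by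
        rw [dL1, Finset.sum_congr rfl hpt, Finset.sum_add_distrib,
          Finset.sum_ite_eq, Finset.sum_ite_eq]
        simp
        norm_num
      rw [hd, mul_one, if_pos hg]

end Main

end LPTightAux

/-- On a `(2,1)`-stable instance the LP relaxation is tight: the integer solution
corresponding to the optimal labeling `g` is an optimal LP solution with value
`Q(g)`, and every optimal LP solution is integral. -/
theorem lp_tight_of_two_one_stable [Fintype V] [Fintype L] [DecidableEq L]
    (E : Finset (V × V)) (c : V → L → ℝ) (w : V × V → ℝ)
    (hc : ∀ u i, 0 ≤ c u i) (hw : ∀ e ∈ E, 0 ≤ w e)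
    (g : V → L) (hstable : IsStable E c w 2 1 g) :
    QLP E c w (toVec g) = Q E c w g ∧
    (∀ μ : V → L → ℝ, (∀ u, IsProbVec (μ u)) → QLP E c w (toVec g) ≤ QLP E c w μ) ∧
    (∀ μ : V → L → ℝ, (∀ u, IsProbVec (μ u)) → QLP E c w μ = QLP E c w (toVec g) →
      ∀ u, ∀ i, μ u i = 0 ∨ μ u i = 1) := by
  classical
  have hb : ∀ (μ : V → L → ℝ), (∀ u, IsProbVec (μ u)) →
      ∀ u j, 0 ≤ μ u j ∧ μ u j ≤ 1 := by
    intro μ hμ u j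
    refine ⟨(hμ u).1 j, ?_⟩
    rw [← (hμ u).2]
    exact Finset.single_le_sum (fun k _ => (hμ u).1 k) (Finset.mem_univ j)
  have hpart1 := LPTightAux.qlp_toVec E c w g
  refine ⟨hpart1, ?_, ?_⟩
  · intro μ hμ
    have h0 : (0:ℝ) ≤ ∑ i, LPTightAux.Ei E c w g μ i :=
      Finset.sum_nonneg fun i _ => LPTightAux.Ei_nonneg hw hstable (hb μ hμ) i
    have h1 := LPTightAux.sum_Ei_le E c w hw g μ hμ
    rw [hpart1]
    linarith
  · intro μ hμ heq
    have hQeq : QLP E c w μ = Q E c w g := by rw [heq, hpart1]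
    have h1 := LPTightAux.sum_Ei_le E c w hw g μ hμ
    have hzero : ∀ u i, i ≠ g u → μ u i = 0 := by
      intro u0 i0 hne
      by_contra hne0
      have hpos : 0 < μ u0 i0 := lt_of_le_of_ne ((hμ u0).1 i0) (Ne.symm hne0)
      have hSne : (Finset.univ.filter (fun h : V → L => h ≠ g)).Nonempty := by
        refine ⟨Function.update g u0 i0,
          Finset.mem_filter.2 ⟨Finset.mem_univ _, fun hcontra => ?_⟩⟩
        have h2 := congrFun hcontra u0
        rw [Function.update_self] at h2
        exact hne h2
      obtain ⟨hm, hmS, hmle⟩ :=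
        Finset.exists_min_image _ (fun h => LPTightAux.Delta E c w g h) hSne
      have hmne : hm ≠ g := (Finset.mem_filter.1 hmS).2
      have hδ : 0 < LPTightAux.Delta E c w g hm := LPTightAux.delta_pos hw hstable hm hmne
      have hlow : LPTightAux.Delta E c w g hm * μ u0 i0 ≤ LPTightAux.Ei E c w g μ i0 := by
        rw [← LPTightAux.integral_delta_hump E c w g (hb μ hμ) i0]
        have heqI : LPTightAux.Delta E c w g hm * μ u0 i0
            = ∫ θ in (0:ℝ)..1, LPTightAux.Delta E c w g hm * LPTightAux.step (μ u0 i0) θ := by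
          rw [intervalIntegral.integral_const_mul,
            LPTightAux.integral_step (hb μ hμ u0 i0).1 (hb μ hμ u0 i0).2]
        rw [heqI]
        refine intervalIntegral.integral_mono_on zero_le_one
          ((LPTightAux.step_intervalIntegrable _).const_mul _)
          (LPTightAux.delta_hump_intervalIntegrable E c w g μ i0) ?_
        intro x _
        by_cases hxa : x ≤ μ u0 i0
        · have hstep : LPTightAux.step (μ u0 i0) x = 1 := if_pos hxa
          have hh : LPTightAux.hump g μ i0 x ≠ g := by
            intro hcontra
            have h3 := congrFun hcontra u0
            unfold LPTightAux.hump at h3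
            rw [if_pos hxa] at h3
            exact hne h3
          rw [hstep, mul_one]
          exact hmle _ (Finset.mem_filter.2 ⟨Finset.mem_univ _, hh⟩)
        · have hstep : LPTightAux.step (μ u0 i0) x = 0 := if_neg hxa
          rw [hstep, mul_zero]
          exact LPTightAux.delta_nonneg hw hstable _
      have hle : LPTightAux.Ei E c w g μ i0 ≤ ∑ i, LPTightAux.Ei E c w g μ i :=
        Finset.single_le_sum
          (fun i _ => LPTightAux.Ei_nonneg hw hstable (hb μ hμ) i) (Finset.mem_univ i0)
      nlinarith
    intro u i
    rcases eq_or_ne i (g u) with heqi | hne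
    · right
      have h4 : ∑ j, μ u j = μ u (g u) :=
        Finset.sum_eq_single_of_mem (g u) (Finset.mem_univ _) (fun j _ hj => hzero u j hj)
      rw [heqi, ← (hμ u).2, h4]
    · left; exact hzero u i hne
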